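/- arXiv:1812.03703 — 2 statements merged into one kernel-verified Lean document; each statement's English description precedes it below -/
import Mathlib

section
/- Fix natural numbers n ≥ 1 and a real ε with 0 ≤ ε < 1. Consider a single-bit delegation scheme (responses are single bits b ∈ {0,1}) whose family of target probabilities is given by DQC1 acceptance probabilities: for each x ∈ X there is a unitary V_x on ℂ^{2^n} and p x := p_{V_x}^{DQC1}(1). Assume the scheme is ε-correct and blind. Fix x₀ ∈ X and a key k₀ in the support of K_{x₀}, and set a := E x₀ k₀. For x ∈ X define η(x) := Pr_{k ~ K_x}[E x k = a] and the acceptance probability p_acc(x) := Σ_k K_x(k) · [E x k = a] · Pr_{b ~ q_a}[D x k b = 1]. Then for every x ∈ X: η(x) > 0, and η(x)(1−ε)·(p x) ≤ p_acc(x) ≤ η(x)(1+ε)·(p x); consequently p_acc(x) > 0 whenever p x > 0, and p_acc(x) = 0 whenever p x = 0. (This is the reduction underlying Theorem 4: a correct and blind classical delegation of DQC1 sampling yields a nondeterministic-style acceptance criterion deciding positivity of p_{V_x}^{DQC1}(1).) -/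
open Kronecker Matrix

/-- Rank-one projector `|i⟩⟨i|` on a single qubit. -/
noncomputable def qproj (i : Fin 2) : Matrix (Fin 2) (Fin 2) ℂ :=
  Matrix.single i i 1

/-- The DQC1 acceptance probability
`p_V^{DQC1}(1) = Tr[(|1⟩⟨1| ⊗ I) V (|0⟩⟨0| ⊗ I/2^m) V†]`
for a unitary `V` on one clean qubit together with `m` maximally mixed qubits. -/
noncomputable def dqc1Prob (m : ℕ)
    (V : Matrix (Fin 2 × Fin (2 ^ m)) (Fin 2 × Fin (2 ^ m)) ℂ) : ℝ :=
  (Matrix.trace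
    ((qproj 1 ⊗ₖ (1 : Matrix (Fin (2 ^ m)) (Fin (2 ^ m)) ℂ)) *
      (V * ((qproj 0 ⊗ₖ (((2 : ℂ) ^ m)⁻¹ • (1 : Matrix (Fin (2 ^ m)) (Fin (2 ^ m)) ℂ))) *
        Vᴴ)))).re

/-- A correct and blind single-bit classical delegation of DQC1 sampling yields a
nondeterministic-style acceptance criterion deciding positivity of `p_{V_x}^{DQC1}(1)`:
for every input `x`, the probability `η x` of reproducing the fixed message `a` is
positive, and the acceptance probability `pacc x` is multiplicatively sandwiched
between `η x (1-ε) p x` and `η x (1+ε) p x`; hence `pacc x > 0` iff `p x > 0`. -/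
theorem blind_dqc1_delegation_single_bit
    (n : ℕ) (hn : 1 ≤ n) (ε : ℝ) (hε0 : 0 ≤ ε) (hε1 : ε < 1)
    (X Key A : Type) [Fintype X] [Fintype Key] [Fintype A] [DecidableEq A]
    -- key generation distribution
    (K : X → Key → ℝ)
    (hKnn : ∀ x k, 0 ≤ K x k) (hKsum : ∀ x, ∑ k, K x k = 1)
    -- encryption
    (E : X → Key → A)
    -- server response distribution (responses are single bits)
    (q : A → Bool → ℝ)
    (hqnn : ∀ a b, 0 ≤ q a b) (hqsum : ∀ a, ∑ b, q a b = 1)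
    -- decryption
    (D : X → Key → Bool → Bool)
    -- target probabilities: DQC1 acceptance probabilities of unitaries V_x
    (V : X → Matrix (Fin 2 × Fin (2 ^ (n - 1))) (Fin 2 × Fin (2 ^ (n - 1))) ℂ)
    (hV : ∀ x, V x ∈ Matrix.unitaryGroup (Fin 2 × Fin (2 ^ (n - 1))) ℂ)
    (p : X → ℝ) (hp : ∀ x, p x = dqc1Prob (n - 1) (V x))
    -- ε-correctness, for every key in the support of K_x
    (hcorr1 : ∀ x k, 0 < K x k →
      |(∑ b, q (E x k) b * (if D x k b = true then 1 else 0)) - p x| ≤ ε * p x)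
    (hcorr0 : ∀ x k, 0 < K x k →
      |(∑ b, q (E x k) b * (if D x k b = false then 1 else 0)) - (1 - p x)| ≤
        ε * (1 - p x))
    -- blindness: supports of the pushforwards of K_x under E x coincide
    (hblind : ∀ x₁ x₂ a,
      (∃ k, 0 < K x₁ k ∧ E x₁ k = a) ↔ (∃ k, 0 < K x₂ k ∧ E x₂ k = a))
    -- a fixed input, key in its support, and resulting message
    (x₀ : X) (k₀ : Key) (hk₀ : 0 < K x₀ k₀) (a : A) (ha : a = E x₀ k₀)
    -- η and the acceptance probability
    (η pacc : X → ℝ)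
    (hη : ∀ x, η x = ∑ k, K x k * (if E x k = a then 1 else 0))
    (hpacc : ∀ x, pacc x = ∑ k, K x k * (if E x k = a then 1 else 0) *
      (∑ b, q a b * (if D x k b = true then 1 else 0))) :
    ∀ x, 0 < η x ∧
      (η x * (1 - ε) * p x ≤ pacc x ∧ pacc x ≤ η x * (1 + ε) * p x) ∧
      (0 < p x → 0 < pacc x) ∧ (p x = 0 → pacc x = 0) := by
  intro x
  obtain ⟨k₁, hk₁, hEk₁⟩ := (hblind x₀ x a).mp ⟨k₀, hk₀, ha.symm⟩
  have hηpos : 0 < η x := by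
    rw [hη]
    have h1 : K x k₁ * (if E x k₁ = a then 1 else 0) = K x k₁ := by
      simp [hEk₁]
    calc (0:ℝ) < K x k₁ := hk₁
      _ = K x k₁ * (if E x k₁ = a then 1 else 0) := h1.symm
      _ ≤ ∑ k, K x k * (if E x k = a then 1 else 0) :=
        Finset.single_le_sum (f := fun k => K x k * (if E x k = a then 1 else 0))
          (fun k _ => mul_nonneg (hKnn x k) (by positivity)) (Finset.mem_univ k₁)
  have key : ∀ k, 0 < K x k → E x k = a →
      (1 - ε) * p x ≤ (∑ b, q a b * (if D x k b = true then 1 else 0)) ∧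
      (∑ b, q a b * (if D x k b = true then 1 else 0)) ≤ (1 + ε) * p x := by
    intro k hk hE
    have := hcorr1 x k hk
    rw [hE] at this
    rw [abs_le] at this
    constructor <;> nlinarith [this.1, this.2]
  have hlow : η x * (1 - ε) * p x ≤ pacc x := by
    rw [hη, hpacc, Finset.sum_mul, Finset.sum_mul]
    apply Finset.sum_le_sum
    intro k _
    by_cases hE : E x k = a
    · rw [if_pos hE, mul_one]
      rcases lt_or_eq_of_le (hKnn x k) with hk | hk
      · have := (key k hk hE).1
        calc K x k * (1 - ε) * p x = K x k * ((1 - ε) * p x) := by ring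
          _ ≤ K x k * (∑ b, q a b * (if D x k b = true then 1 else 0)) := by
            exact mul_le_mul_of_nonneg_left this (le_of_lt hk)
      · simp [← hk]
    · simp [hE]
  have hhigh : pacc x ≤ η x * (1 + ε) * p x := by
    rw [hη, hpacc, Finset.sum_mul, Finset.sum_mul]
    apply Finset.sum_le_sum
    intro k _
    by_cases hE : E x k = a
    · rw [if_pos hE, mul_one]
      rcases lt_or_eq_of_le (hKnn x k) with hk | hk
      · have := (key k hk hE).2
        calc K x k * (∑ b, q a b * (if D x k b = true then 1 else 0))
            ≤ K x k * ((1 + ε) * p x) :=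
              mul_le_mul_of_nonneg_left this (le_of_lt hk)
          _ = K x k * (1 + ε) * p x := by ring
      · simp [← hk]
    · simp [hE]
  refine ⟨hηpos, ⟨hlow, hhigh⟩, ?_, ?_⟩
  · intro hpx
    have : 0 < η x * (1 - ε) * p x :=
      mul_pos (mul_pos hηpos (by linarith)) hpx
    linarith
  · intro hpx
    rw [hpx] at hlow hhigh
    simp at hlow hhigh
    linarith
end

section
/- Fix natural numbers n ≥ 1, m ≥ 1, and a real ε with 0 ≤ ε < 1. Consider a string-response delegation scheme (responses are bit strings b ∈ {0,1}^m) whose family of target probabilities is given by DQC1 acceptance probabilities: for each x ∈ X there is a unitary V_x on ℂ^{2^n} and p x := p_{V_x}^{DQC1}(1). Assume the scheme is ε-correct and blind. Fix x₀ ∈ X and a key k₀ in the support of K_{x₀}, and set a := E x₀ k₀. For x ∈ X define η(x) := Pr_{k ~ K_x}[E x k = a] and the acceptance probability p_acc(x) := Σ_k K_x(k) · [E x k = a] · Pr_{b ~ q_a}[D x k b = 1]. Then for every x ∈ X: η(x) > 0, and η(x)(1−ε)·(p x) ≤ p_acc(x) ≤ η(x)(1+ε)·(p x); consequently p_acc(x)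 > 0 whenever p x > 0, and p_acc(x) = 0 whenever p x = 0. (This is the reduction underlying Theorem 6, where the server returns a polynomial-length bit string rather than a single bit.) -/
open Kronecker Matrix

/-- A correct and blind string-response classical delegation of DQC1 sampling yields a
nondeterministic-style acceptance criterion deciding positivity of `p_{V_x}^{DQC1}(1)`:
for every input `x`, the probability `η x` of reproducing the fixed message `a` is
positive, and the acceptance probability `pacc x` is multiplicatively sandwiched
between `η x (1-ε) p x` and `η x (1+ε) p x`; hence `pacc x > 0` iff `p x > 0`. -/
theorem blind_dqc1_delegation_string_response
    (n m : ℕ) (hn : 1 ≤ n) (hm : 1 ≤ m) (ε : ℝ) (hε0 : 0 ≤ ε) (hε1 : ε < 1)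
    (X Key A : Type) [Fintype X] [Fintype Key] [Fintype A] [DecidableEq A]
    -- key generation distribution
    (K : X → Key → ℝ)
    (hKnn : ∀ x k, 0 ≤ K x k) (hKsum : ∀ x, ∑ k, K x k = 1)
    -- encryption
    (E : X → Key → A)
    -- server response distribution (responses are bit strings of length m)
    (q : A → (Fin m → Bool) → ℝ)
    (hqnn : ∀ a b, 0 ≤ q a b) (hqsum : ∀ a, ∑ b, q a b = 1)
    -- decryption
    (D : X → Key → (Fin m → Bool) → Bool)
    -- target probabilities: DQC1 acceptance probabilities of unitaries V_x
    (V : X → Matrix (Fin 2 × Fin (2 ^ (n - 1))) (Fin 2 × Fin (2 ^ (n - 1))) ℂ)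
    (hV : ∀ x, V x ∈ Matrix.unitaryGroup (Fin 2 × Fin (2 ^ (n - 1))) ℂ)
    (p : X → ℝ) (hp : ∀ x, p x = dqc1Prob (n - 1) (V x))
    -- ε-correctness, for every key in the support of K_x
    (hcorr1 : ∀ x k, 0 < K x k →
      |(∑ b, q (E x k) b * (if D x k b = true then 1 else 0)) - p x| ≤ ε * p x)
    (hcorr0 : ∀ x k, 0 < K x k →
      |(∑ b, q (E x k) b * (if D x k b = false then 1 else 0)) - (1 - p x)| ≤
        ε * (1 - p x))
    -- blindness: supports of the pushforwards of K_x under E x coincide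
    (hblind : ∀ x₁ x₂ a,
      (∃ k, 0 < K x₁ k ∧ E x₁ k = a) ↔ (∃ k, 0 < K x₂ k ∧ E x₂ k = a))
    -- a fixed input, key in its support, and resulting message
    (x₀ : X) (k₀ : Key) (hk₀ : 0 < K x₀ k₀) (a : A) (ha : a = E x₀ k₀)
    -- η and the acceptance probability
    (η pacc : X → ℝ)
    (hη : ∀ x, η x = ∑ k, K x k * (if E x k = a then 1 else 0))
    (hpacc : ∀ x, pacc x = ∑ k, K x k * (if E x k = a then 1 else 0) *
      (∑ b, q a b * (if D x k b = true then 1 else 0))) :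
    ∀ x, 0 < η x ∧
      (η x * (1 - ε) * p x ≤ pacc x ∧ pacc x ≤ η x * (1 + ε) * p x) ∧
      (0 < p x → 0 < pacc x) ∧ (p x = 0 → pacc x = 0) := by
  intro x
  obtain ⟨k₁, hk₁, hEk₁⟩ := (hblind x₀ x a).mp ⟨k₀, hk₀, ha.symm⟩
  have hηpos : 0 < η x := by
    rw [hη]
    have h1 : K x k₁ * (if E x k₁ = a then 1 else 0) = K x k₁ := by
      simp [hEk₁]
    calc (0:ℝ) < K x k₁ := hk₁
      _ = K x k₁ * (if E x k₁ = a then 1 else 0) := h1.symm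
      _ ≤ ∑ k, K x k * (if E x k = a then 1 else 0) := by
          apply Finset.single_le_sum (f := fun k => K x k * (if E x k = a then 1 else 0))
          · intro k _
            have := hKnn x k
            positivity
          · exact Finset.mem_univ _
  have hlow : η x * (1 - ε) * p x ≤ pacc x := by
    rw [hη, hpacc, Finset.sum_mul, Finset.sum_mul]
    apply Finset.sum_le_sum
    intro k _
    rcases eq_or_lt_of_le (hKnn x k) with h0 | h0
    · simp [← h0]
    · by_cases hE : E x k = a
      · rw [hE, if_pos rfl]
        have := hcorr1 x k h0
        rw [hE] at this
        have hge : p x - ε * p x ≤ ∑ b, q a b * (if D x k b = true then 1 else 0) := by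
          have := abs_le.mp this
          linarith [this.1]
        have : (1 - ε) * p x ≤ ∑ b, q a b * (if D x k b = true then 1 else 0) := by
          linarith
        calc K x k * 1 * (1 - ε) * p x = K x k * ((1 - ε) * p x) := by ring
          _ ≤ K x k * (∑ b, q a b * (if D x k b = true then 1 else 0)) :=
              mul_le_mul_of_nonneg_left this h0.le
          _ = K x k * 1 * (∑ b, q a b * (if D x k b = true then 1 else 0)) := by ring
      · simp [hE]
  have hhigh : pacc x ≤ η x * (1 + ε) * p x := by
    rw [hη, hpacc, Finset.sum_mul, Finset.sum_mul]
    apply Finset.sum_le_sum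
    intro k _
    rcases eq_or_lt_of_le (hKnn x k) with h0 | h0
    · simp [← h0]
    · by_cases hE : E x k = a
      · rw [hE, if_pos rfl]
        have := hcorr1 x k h0
        rw [hE] at this
        have := abs_le.mp this
        have hle : ∑ b, q a b * (if D x k b = true then 1 else 0) ≤ (1 + ε) * p x := by
          linarith [this.2]
        calc K x k * 1 * (∑ b, q a b * (if D x k b = true then 1 else 0))
            = K x k * (∑ b, q a b * (if D x k b = true then 1 else 0)) := by ring
          _ ≤ K x k * ((1 + ε) * p x) := mul_le_mul_of_nonneg_left hle h0.le
          _ = K x k * 1 * (1 + ε) * p x := by ring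
      · simp [hE]
  refine ⟨hηpos, ⟨hlow, hhigh⟩, ?_, ?_⟩
  · intro hpx
    have : 0 < η x * (1 - ε) * p x := by
      have : 0 < 1 - ε := by linarith
      positivity
    linarith
  · intro hpx
    rw [hpx] at hlow hhigh
    simp only [mul_zero] at hlow hhigh
    linarith
end
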